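/- There is an integer E₁ depending only on n (the paper computes E₁ = (10n+1)·log n) such that for every xy ∈ {αβ, αγ, βγ} and every pair of nodes u, v of G: the weighted RNA folding score WRNA([NG(u) ∘ p(LG(v))^R]_{xy}) equals E₁ if u ∈ N(v), and is at most E₁ − 1 otherwise. -/

import Mathlib

/-!
Formalization of (weighted) RNA folding from
"If the Current Clique Algorithms are Optimal, so is Valiant's Parser"
(Abboud, Backurs, Vassilevska Williams), Section 3.

Letters come from `Σ ∪ Σ'`, modelled as `σ ⊕ σ`: `Sum.inl a` is the letter `a ∈ Σ` and
`Sum.inr a` is its matching letter `a' ∈ Σ'`.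
-/

namespace RNAFolding

/-- Letters `x` and `y` match iff `y = x'` or `x = y'`. -/
def LMatches {σ : Type*} : σ ⊕ σ → σ ⊕ σ → Prop
  | .inl a, .inr b => a = b
  | .inr a, .inl b => a = b
  | _, _ => False

/-- Two pairs of indices `(i₁,j₁)`, `(i₂,j₂)` with `i₁<j₁` and `i₂<j₂` "cross" iff they share an
index, or `i₁<i₂<j₁<j₂`, or `i₂<i₁<j₂<j₁`. -/
def Crosses (p q : ℕ × ℕ) : Prop :=
  p.1 = q.1 ∨ p.1 = q.2 ∨ p.2 = q.1 ∨ p.2 = q.2 ∨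
    (p.1 < q.1 ∧ q.1 < p.2 ∧ p.2 < q.2) ∨ (q.1 < p.1 ∧ p.1 < q.2 ∧ q.2 < p.2)

/-- `A` is a valid folding of `S`: every pair `(i,j) ∈ A` satisfies `i < j < |S|` and the letters
`S[i]`, `S[j]` match, and no two pairs of `A` cross. -/
def IsFolding {σ : Type*} (S : List (σ ⊕ σ)) (A : Finset (ℕ × ℕ)) : Prop :=
  (∀ p ∈ A, p.1 < p.2 ∧ p.2 < S.length ∧ ∃ x ∈ S[p.1]?, ∃ y ∈ S[p.2]?, LMatches x y) ∧
    ∀ p ∈ A, ∀ q ∈ A, p ≠ q → ¬ Crosses p q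

/-- The weighted RNA folding score `WRNA(S)`: the maximum of `∑_{(i,j) ∈ A} w(S[i])` over all
valid foldings `A` of `S` (with the weight function extended to `Σ'` by `w(σ') = w(σ)`). -/
noncomputable def WRNA {σ : Type*} (w : σ → ℕ) (S : List (σ ⊕ σ)) : ℕ :=
  sSup {m | ∃ A : Finset (ℕ × ℕ),
    IsFolding S A ∧ ∑ p ∈ A, (S.map (Sum.elim w w)).getD p.1 0 = m}

/-- The (unweighted) RNA folding score `RNA(S)`: the maximum number of non-crossing matching
pairs, i.e. the weighted score with all weights equal to `1`. -/
noncomputable def RNA {σ : Type*} (S : List (σ ⊕ σ)) : ℕ := WRNA (fun _ => 1) S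

/-! ### The clique-detecting RNA sequence -/

/-- The three pairs of types `αβ`, `αγ`, `βγ`. -/
inductive PT
  | ab | ag | bg
  deriving DecidableEq

/-- The base symbols `0, 1, $, #, g` that get marked with a pair of types. -/
inductive RBase
  | b0 | b1 | dollar | hash | g
  deriving DecidableEq

/-- The 18 plain letters: `Σ = {α, β, γ} ∪ ⋃_{xy ∈ {αβ,αγ,βγ}} {0, 1, $, #, g}_xy`
(together with the matching copies `Σ'` this makes 36 letters). -/
inductive RSig
  | alpha | beta | gamma
  | mk (b : RBase) (p : PT)
  deriving DecidableEq

/-- Letters: a plain (`Sum.inl`) or primed (`Sum.inr`) copy of each symbol of `Σ`. -/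
abbrev RL := RSig ⊕ RSig

/-- A "core" symbol: a base symbol with a primed-ness flag, before marking by a pair of types. -/
abbrev RCore := Bool × RBase

/-- Marking a core symbol with the pair of types `xy`. -/
def mark (p : PT) : RCore → RL
  | (false, b) => .inl (.mk b p)
  | (true, b) => .inr (.mk b p)

/-- `[s]_xy`: marking every letter of a core string with the pair of types `xy`. -/
def markStr (p : PT) (s : List RCore) : List RL := s.map (mark p)

/-- `p(s)`: replacing every letter `σ` by its matching letter `σ'` (and conversely). -/
def primeStr (s : List RCore) : List RCore := s.map (fun x => (!x.1, x.2))

/-- `m`-fold repetition `l^m` of a list. -/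
def rep {α : Type*} (l : List α) (m : ℕ) : List α := (List.replicate m l).flatten

/-- The binary encoding `v̄` of a node `v`, of length exactly `2⌈log n⌉`, as a core string. -/
def bin (n : ℕ) (v : Fin n) : List RCore :=
  (List.range (2 * Nat.clog 2 n)).map
    (fun i => (false, if v.val.testBit i then RBase.b1 else RBase.b0))

/-- The (unprimed) letter `$`. -/
def dol : RCore := (false, .dollar)

/-- The (unprimed) letter `#`. -/
def hsh : RCore := (false, .hash)

open Classical in
/-- The neighbors of `v`, in some fixed order. -/
noncomputable def nbrs (n : ℕ) (G : SimpleGraph (Fin n)) (v : Fin n) : List (Fin n) :=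
  (Finset.univ.filter (fun u => G.Adj v u)).toList

open Classical in
/-- The non-neighbors of `v`, in some fixed order. -/
noncomputable def nonNbrs (n : ℕ) (G : SimpleGraph (Fin n)) (v : Fin n) : List (Fin n) :=
  (Finset.univ.filter (fun u => ¬ G.Adj v u)).toList

/-- The node gadget `NG(v) = $^{2n} v̄ $^{2n}`. -/
def NGr (n : ℕ) (v : Fin n) : List RCore :=
  List.replicate (2 * n) dol ++ bin n v ++ List.replicate (2 * n) dol

/-- The list gadget `LG(v) = (∘_{u ∈ N(v)} ($ ū $)) ∘ (∘_{u ∉ N(v)} ($ $))`. -/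
noncomputable def LGr (n : ℕ) (G : SimpleGraph (Fin n)) (v : Fin n) : List RCore :=
  (nbrs n G v).flatMap (fun u => [dol] ++ bin n u ++ [dol]) ++
    (nonNbrs n G v).flatMap (fun _ => [dol, dol])

/-- The clique node gadget `CNG(t) = ∘_{v ∈ t} (# NG(v) #)^k`. -/
noncomputable def CNGr (n k : ℕ) (t : Finset (Fin n)) : List RCore :=
  t.toList.flatMap (fun v => rep ([hsh] ++ NGr n v ++ [hsh]) k)

/-- The clique list gadget `CLG(t) = (∘_{v ∈ t} (# LG(v) #))^k`. -/
noncomputable def CLGr (n k : ℕ) (G : SimpleGraph (Fin n)) (t : Finset (Fin n)) : List RCore :=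
  rep (t.toList.flatMap (fun v => [hsh] ++ LGr n G v ++ [hsh])) k

/-- `CG_α(t) = [g CNG(t) g]_{αγ} ∘ [g' p(CLG(t))^R g']_{αβ}`. -/
noncomputable def CGa (n k : ℕ) (G : SimpleGraph (Fin n)) (t : Finset (Fin n)) : List RL :=
  markStr .ag ([(false, .g)] ++ CNGr n k t ++ [(false, .g)]) ++
    markStr .ab ([(true, .g)] ++ (primeStr (CLGr n k G t)).reverse ++ [(true, .g)])

/-- `CG_β(t) = [g CNG(t) g]_{αβ} ∘ [g' p(CLG(t))^R g']_{βγ}`. -/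
noncomputable def CGb (n k : ℕ) (G : SimpleGraph (Fin n)) (t : Finset (Fin n)) : List RL :=
  markStr .ab ([(false, .g)] ++ CNGr n k t ++ [(false, .g)]) ++
    markStr .bg ([(true, .g)] ++ (primeStr (CLGr n k G t)).reverse ++ [(true, .g)])

/-- `CG_γ(t) = [g CNG(t) g]_{βγ} ∘ [g' p(CLG(t))^R g']_{αγ}`. -/
noncomputable def CGg (n k : ℕ) (G : SimpleGraph (Fin n)) (t : Finset (Fin n)) : List RL :=
  markStr .bg ([(false, .g)] ++ CNGr n k t ++ [(false, .g)]) ++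
    markStr .ag ([(true, .g)] ++ (primeStr (CLGr n k G t)).reverse ++ [(true, .g)])

/-- `log n` (base 2). -/
def logn (n : ℕ) : ℕ := Nat.log 2 n

/-- `ℓ₁ = 10·k²·n·log n`. -/
def l1 (n k : ℕ) : ℕ := 10 * k ^ 2 * n * logn n

/-- `ℓ₂ = 10·k²·ℓ₁`. -/
def l2 (n k : ℕ) : ℕ := 10 * k ^ 2 * l1 n k

/-- `ℓ₃ = 10·ℓ₂`. -/
def l3 (n k : ℕ) : ℕ := 10 * l2 n k

/-- The weight function: `w(0) = w(1) = 1`, `w($) = 10·log n`, `w(#) = ℓ₁`, `w(g) = ℓ₂`,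
`w(α) = w(β) = w(γ) = ℓ₃`. -/
def wt (n k : ℕ) : RSig → ℕ
  | .alpha => l3 n k
  | .beta => l3 n k
  | .gamma => l3 n k
  | .mk .b0 _ => 1
  | .mk .b1 _ => 1
  | .mk .dollar _ => 10 * logn n
  | .mk .hash _ => l1 n k
  | .mk .g _ => l2 n k

open Classical in
/-- The set `C_k` of `k`-cliques of `G`, in some fixed order. -/
noncomputable def cliqueList (n k : ℕ) (G : SimpleGraph (Fin n)) : List (Finset (Fin n)) :=
  (Finset.univ.filter (fun t => G.IsNClique k t)).toList

/-- The clique-detecting sequence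
`S_G = α^{2n^k} (∘_t α' CG_α(t) α') α^{2n^k} ∘ β^{2n^k} (∘_t β' CG_β(t) β') β^{2n^k} ∘
γ^{2n^k} (∘_t γ' CG_γ(t) γ') γ^{2n^k}`. -/
noncomputable def SG (n k : ℕ) (G : SimpleGraph (Fin n)) : List RL :=
  List.replicate (2 * n ^ k) (.inl .alpha) ++
    (cliqueList n k G).flatMap (fun t => [.inr .alpha] ++ CGa n k G t ++ [.inr .alpha]) ++
    List.replicate (2 * n ^ k) (.inl .alpha) ++
  (List.replicate (2 * n ^ k) (.inl .beta) ++
    (cliqueList n k G).flatMap (fun t => [.inr .beta] ++ CGb n k G t ++ [.inr .beta]) ++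
    List.replicate (2 * n ^ k) (.inl .beta)) ++
  (List.replicate (2 * n ^ k) (.inl .gamma) ++
    (cliqueList n k G).flatMap (fun t => [.inr .gamma] ++ CGg n k G t ++ [.inr .gamma]) ++
    List.replicate (2 * n ^ k) (.inl .gamma))

/-! ### Auxiliary machinery for Statement 5 -/

section generic
variable {σ : Type*} (w : σ → ℕ) (S : List (σ ⊕ σ))

lemma wrna_bddAbove : BddAbove {m | ∃ A : Finset (ℕ × ℕ),
    IsFolding S A ∧ ∑ p ∈ A, (S.map (Sum.elim w w)).getD p.1 0 = m} := by
  refine ⟨∑ p ∈ Finset.range S.length ×ˢ Finset.range S.length,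
    (S.map (Sum.elim w w)).getD p.1 0, ?_⟩
  rintro b ⟨A, hA, rfl⟩
  apply Finset.sum_le_sum_of_subset
  intro p hp
  have h := (hA.1 p hp)
  simp only [Finset.mem_product, Finset.mem_range]
  omega

lemma wrna_le {E : ℕ}
    (h : ∀ A : Finset (ℕ × ℕ), IsFolding S A →
      ∑ p ∈ A, (S.map (Sum.elim w w)).getD p.1 0 ≤ E) : WRNA w S ≤ E := by
  apply csSup_le
  · exact ⟨0, ∅, ⟨by simp, by simp⟩, by simp⟩
  · rintro b ⟨A, hA, rfl⟩; exact h A hA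

lemma le_wrna {A : Finset (ℕ × ℕ)} (hA : IsFolding S A) :
    ∑ p ∈ A, (S.map (Sum.elim w w)).getD p.1 0 ≤ WRNA w S :=
  le_csSup (wrna_bddAbove w S) ⟨A, hA, rfl⟩

end generic

/-- helper: successor-step strict monotonicity implies strict monotonicity on a range -/
lemma mono_of_step {h : ℕ → ℕ} {m : ℕ} (hs : ∀ i, i + 1 < m → h i < h (i + 1)) :
    ∀ i j, i < j → j < m → h i < h j := by
  intro i j hij hjm
  induction j with
  | zero => omega
  | succ j ih =>
    rcases Nat.lt_or_ge i j with h' | h'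
    · exact lt_trans (ih h' (by omega)) (hs j hjm)
    · have : i = j := by omega
      subst this; exact hs i hjm

/-- generic lower-bound: a monotone matching given by a function yields a folding -/
lemma exists_folding_of_mono {σ : Type*} (w : σ → ℕ) (S : List (σ ⊕ σ)) (m : ℕ)
    (F : ℕ → ℕ × ℕ)
    (h1 : ∀ i < m, (F i).1 < (F i).2)
    (h2 : ∀ i < m, (F i).2 < S.length)
    (hm1 : ∀ i j, i < j → j < m → (F i).1 < (F j).1)
    (hm2 : ∀ i j, i < j → j < m → (F j).2 < (F i).2)
    (hmatch : ∀ i < m, ∃ x ∈ S[(F i).1]?, ∃ y ∈ S[(F i).2]?, LMatches x y) :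
    ∑ i ∈ Finset.range m, (S.map (Sum.elim w w)).getD (F i).1 0 ≤ WRNA w S := by
  have hinj : Set.InjOn F (Finset.range m) := by
    intro a ha b hb hab
    simp only [Finset.coe_range, Set.mem_Iio] at ha hb
    by_contra hne
    rcases Nat.lt_or_ge a b with h' | h'
    · exact absurd (congrArg Prod.fst hab) (Nat.ne_of_lt (hm1 a b h' hb))
    · have h'' : b < a := by omega
      exact absurd (congrArg Prod.fst hab) (Nat.ne_of_gt (hm1 b a h'' ha))
  have hsum : ∑ p ∈ (Finset.range m).image F, (S.map (Sum.elim w w)).getD p.1 0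
      = ∑ i ∈ Finset.range m, (S.map (Sum.elim w w)).getD (F i).1 0 :=
    Finset.sum_image (fun a ha b hb => hinj (by simpa using ha) (by simpa using hb))
  rw [← hsum]
  apply le_wrna
  constructor
  · intro p hp
    simp only [Finset.mem_image, Finset.mem_range] at hp
    obtain ⟨i, hi, rfl⟩ := hp
    exact ⟨h1 i hi, h2 i hi, hmatch i hi⟩
  · intro p hp q hq hpq
    simp only [Finset.mem_image, Finset.mem_range] at hp hq
    obtain ⟨a, ha, rfl⟩ := hp
    obtain ⟨b, hb, rfl⟩ := hq
    have hab : a ≠ b := fun h => hpq (by rw [h])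
    have key : ∀ a b, a < b → b < m → ¬ Crosses (F a) (F b) := by
      intro a b h' hbm
      have e1 := hm1 a b h' hbm
      have e2 := hm2 a b h' hbm
      have e3 := h1 a (lt_trans h' hbm)
      have e4 := h1 b hbm
      intro hc
      rcases hc with h | h | h | h | h | h <;> omega
    rcases Nat.lt_or_ge a b with h' | h'
    · exact key a b h' hb
    · have h'' : b < a := by omega
      intro hc
      apply key b a h'' ha
      rcases hc with h | h | h | h | h | h
      · exact Or.inl h.symm
      · exact Or.inr (Or.inr (Or.inl h.symm))
      · exact Or.inr (Or.inl h.symm)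
      · exact Or.inr (Or.inr (Or.inr (Or.inl h.symm)))
      · exact Or.inr (Or.inr (Or.inr (Or.inr (Or.inr h))))
      · exact Or.inr (Or.inr (Or.inr (Or.inr (Or.inl h))))

/-- counting positions in a list satisfying a predicate -/
lemma card_filter_range_getD {α : Type*} (p : α → Bool) (d : α) :
    ∀ l : List α, ((Finset.range l.length).filter (fun i => p (l.getD i d))).card
      = l.countP p := by
  intro l
  induction l with
  | nil => simp
  | cons a t ih =>
    rw [Finset.card_filter, List.length_cons, Finset.sum_range_succ', List.countP_cons]
    simp only [List.getD_cons_succ, List.getD_cons_zero]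
    rw [← Finset.card_filter, ih]

/-! ### Gadget structure lemmas -/

/-- Is the base of a core symbol a dollar? -/
def isD (c : RCore) : Bool := decide (c.2 = RBase.dollar)

/-- window length -/
def LL (n : ℕ) : ℕ := 2 * Nat.clog 2 n

/-- dollar weight -/
def Wd (n : ℕ) : ℕ := 10 * logn n

/-- the value `E₁` -/
def E1v (n : ℕ) : ℕ := 2 * n * Wd n + LL n

/-- priming function -/
def pr1 (c : RCore) : RCore := (!c.1, c.2)

lemma primeStr_eq_map (s : List RCore) : primeStr s = s.map pr1 := rfl

lemma lmatches_mark_iff (xy : PT) (c d : RCore) :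
    LMatches (mark xy c) (mark xy d) ↔ (c.1 ≠ d.1 ∧ c.2 = d.2) := by
  rcases c with ⟨_ | _, cb⟩ <;> rcases d with ⟨_ | _, db⟩ <;>
    simp [mark, LMatches]

lemma elim_wt_mark (n k : ℕ) (xy : PT) (c : RCore) :
    Sum.elim (wt n k) (wt n k) (mark xy c) = wt n k (.mk c.2 xy) := by
  rcases c with ⟨_ | _, cb⟩ <;> rfl

lemma length_bin (n : ℕ) (u : Fin n) : (bin n u).length = LL n := by
  simp [bin, LL]

lemma length_NGr (n : ℕ) (u : Fin n) : (NGr n u).length = 4 * n + LL n := by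
  simp [NGr, length_bin]; ring

lemma fst_of_mem_bin {n : ℕ} {u : Fin n} {c : RCore} (h : c ∈ bin n u) :
    c.1 = false := by
  simp only [bin, List.mem_map, List.mem_range] at h
  obtain ⟨i, _, rfl⟩ := h; rfl

lemma snd_of_mem_bin {n : ℕ} {u : Fin n} {c : RCore} (h : c ∈ bin n u) :
    c.2 = RBase.b0 ∨ c.2 = RBase.b1 := by
  simp only [bin, List.mem_map, List.mem_range] at h
  obtain ⟨i, _, rfl⟩ := h
  by_cases hb : (u : ℕ).testBit i <;> simp [hb]

lemma mem_NGr_cases {n : ℕ} {u : Fin n} {c : RCore} (h : c ∈ NGr n u) :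
    c.1 = false ∧ (c.2 = RBase.dollar ∨ c.2 = RBase.b0 ∨ c.2 = RBase.b1) := by
  simp only [NGr, List.mem_append, List.mem_replicate, dol] at h
  rcases h with (⟨_, rfl⟩ | h) | ⟨_, rfl⟩
  · exact ⟨rfl, Or.inl rfl⟩
  · exact ⟨fst_of_mem_bin h, Or.inr (snd_of_mem_bin h)⟩
  · exact ⟨rfl, Or.inl rfl⟩

lemma mem_LGr_cases {n : ℕ} {G : SimpleGraph (Fin n)} {v : Fin n} {c : RCore}
    (h : c ∈ LGr n G v) : c.1 = false := by
  simp only [LGr, List.mem_append, List.mem_flatMap, List.mem_cons, List.mem_singleton,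
    List.not_mem_nil, or_false, dol] at h
  rcases h with ⟨a, _, (h | h) | h⟩ | ⟨a, _, h | h⟩ <;>
    first
      | (subst h; rfl)
      | exact fst_of_mem_bin h

lemma bin_getD {n : ℕ} {u : Fin n} {r : ℕ} (h : r < LL n) :
    (bin n u).getD r dol = (false, if (u : ℕ).testBit r then RBase.b1 else RBase.b0) := by
  rw [List.getD_eq_getElem _ _ (by rw [length_bin]; exact h)]
  simp [bin]

lemma NGr_getD_lo {n : ℕ} {u : Fin n} {i : ℕ} (h : i < 2 * n) :
    (NGr n u).getD i dol = dol := by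
  rw [NGr, List.append_assoc, List.getD_append _ _ _ _ (by simpa using h)]
  rw [List.getD_eq_getElem _ _ (by simpa using h)]
  simp

lemma NGr_getD_bit {n : ℕ} {u : Fin n} {r : ℕ} (h : r < LL n) :
    (NGr n u).getD (2 * n + r) dol
      = (false, if (u : ℕ).testBit r then RBase.b1 else RBase.b0) := by
  rw [NGr, List.append_assoc,
    List.getD_append_right _ _ _ _ (by simp), List.length_replicate]
  have h2 : 2 * n + r - 2 * n = r := by omega
  rw [h2, List.getD_append _ _ _ _ (by rw [length_bin]; exact h)]
  exact bin_getD h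

lemma NGr_getD_hi {n : ℕ} {u : Fin n} {t : ℕ} (h : t < 2 * n) :
    (NGr n u).getD (2 * n + LL n + t) dol = dol := by
  rw [NGr, List.append_assoc,
    List.getD_append_right _ _ _ _ (by simp; omega), List.length_replicate]
  have h2 : 2 * n + LL n + t - 2 * n = LL n + t := by omega
  rw [h2, List.getD_append_right _ _ _ _ (by rw [length_bin]; omega)]
  rw [length_bin]
  have h3 : LL n + t - LL n = t := by omega
  rw [h3, List.getD_eq_getElem _ _ (by simpa using h)]
  simp

/-- The core string of Statement 5. -/
noncomputable def Tstr (n : ℕ) (G : SimpleGraph (Fin n)) (u v : Fin n) : List RCore :=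
  NGr n u ++ (primeStr (LGr n G v)).reverse

lemma length_Tstr (n : ℕ) (G : SimpleGraph (Fin n)) (u v : Fin n) :
    (Tstr n G u v).length = 4 * n + LL n + (LGr n G v).length := by
  simp [Tstr, length_NGr, primeStr]

lemma Tstr_getD_left {n : ℕ} {G : SimpleGraph (Fin n)} {u v : Fin n} {i : ℕ}
    (h : i < 4 * n + LL n) :
    (Tstr n G u v).getD i dol = (NGr n u).getD i dol :=
  List.getD_append _ _ _ _ (by rw [length_NGr]; exact h)

lemma Tstr_getD_right {n : ℕ} {G : SimpleGraph (Fin n)} {u v : Fin n} {m : ℕ}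
    (hm : m < (LGr n G v).length) :
    (Tstr n G u v).getD (4 * n + LL n + ((LGr n G v).length - 1 - m)) dol
      = pr1 ((LGr n G v).getD m dol) := by
  rw [Tstr, List.getD_append_right _ _ _ _ (by rw [length_NGr]; omega), length_NGr]
  have h2 : 4 * n + LL n + ((LGr n G v).length - 1 - m) - (4 * n + LL n)
      = (LGr n G v).length - 1 - m := by omega
  rw [h2, List.getD_eq_getElem _ _ (by simp [primeStr]; omega), List.getElem_reverse]
  simp only [primeStr_eq_map, List.getElem_map]
  have h3 : (List.map pr1 (LGr n G v)).length - 1 - ((LGr n G v).length - 1 - m) = m := by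
    simp; omega
  simp only [h3]
  rw [List.getD_eq_getElem _ _ hm]

lemma markStr_getElem? (xy : PT) (l : List RCore) {i : ℕ} (h : i < l.length) :
    (markStr xy l)[i]? = some (mark xy (l.getD i dol)) := by
  rw [List.getElem?_eq_getElem (by simpa [markStr] using h)]
  simp [markStr, List.getD_eq_getElem _ _ h, List.getElem?_eq_getElem h]

lemma lmatch_helper (xy : PT) (l : List RCore) {i j : ℕ} (hi : i < l.length)
    (hj : j < l.length)
    (h1 : (l.getD i dol).1 ≠ (l.getD j dol).1) (h2 : (l.getD i dol).2 = (l.getD j dol).2) :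
    ∃ x ∈ (markStr xy l)[i]?, ∃ y ∈ (markStr xy l)[j]?, LMatches x y := by
  rw [markStr_getElem? xy l hi, markStr_getElem? xy l hj]
  exact ⟨_, rfl, _, rfl, (lmatches_mark_iff xy _ _).2 ⟨h1, h2⟩⟩

lemma countP_isD_bin (n : ℕ) (u : Fin n) : (bin n u).countP isD = 0 := by
  rw [List.countP_eq_zero]
  intro a ha
  rcases snd_of_mem_bin ha with h | h <;> simp [isD, h]

lemma countP_isD_blk (n : ℕ) (u : Fin n) :
    ([dol] ++ bin n u ++ [dol]).countP isD = 2 := by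
  rw [List.countP_append, List.countP_append, countP_isD_bin]
  simp [isD, dol]

lemma len_nbrs_add (n : ℕ) (G : SimpleGraph (Fin n)) (v : Fin n) :
    (nbrs n G v).length + (nonNbrs n G v).length = n := by
  classical
  rw [nbrs, nonNbrs, Finset.length_toList, Finset.length_toList]
  rw [Finset.card_filter_add_card_filter_not]
  simp

lemma countP_isD_LGr (n : ℕ) (G : SimpleGraph (Fin n)) (v : Fin n) :
    (LGr n G v).countP isD = 2 * n := by
  rw [LGr, List.countP_append, List.countP_flatMap, List.countP_flatMap]
  have h1 : ((nbrs n G v).map (List.countP isD ∘ fun u => [dol] ++ bin n u ++ [dol]))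
      = (nbrs n G v).map (fun _ => 2) := by
    apply List.map_congr_left
    intro u' _
    exact countP_isD_blk n u'
  have h2 : ((nonNbrs n G v).map (List.countP isD ∘ fun _ => [dol, dol]))
      = (nonNbrs n G v).map (fun _ => 2) := by
    apply List.map_congr_left
    intro u' _
    simp [isD, dol, List.countP_cons]
  rw [h1, h2, List.map_const', List.map_const', List.sum_replicate, List.sum_replicate]
  have := len_nbrs_add n G v
  simp only [smul_eq_mul]
  omega

lemma countP_not_isD_NGr (n : ℕ) (u : Fin n) :
    (NGr n u).countP (fun c => !(isD c)) = LL n := by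
  rw [NGr, List.countP_append, List.countP_append]
  have hrep : (List.replicate (2 * n) dol).countP (fun c => !(isD c)) = 0 := by
    rw [List.countP_eq_zero]
    intro a ha
    simp [List.eq_of_mem_replicate ha, isD, dol]
  have hbin : (bin n u).countP (fun c => !(isD c)) = LL n := by
    rw [show LL n = (bin n u).length from (length_bin n u).symm, List.countP_eq_length]
    intro a ha
    rcases snd_of_mem_bin ha with h | h <;> simp [isD, h]
  rw [hrep, hbin]
  omega

lemma add_le_of_step {h : ℕ → ℕ} {m : ℕ} (hs : ∀ i, i + 1 < m → h i < h (i + 1)) :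
    ∀ r' r, r ≤ r' → r' < m → h r + (r' - r) ≤ h r' := by
  intro r'
  induction r' with
  | zero =>
    intro r h1 h2
    have : r = 0 := by omega
    subst this; simp
  | succ r' ih =>
    intro r h1 h2
    rcases Nat.eq_or_lt_of_le h1 with h' | h'
    · subst h'; simp
    · have := ih r (by omega) (by omega)
      have := hs r' h2
      omega

lemma mem_nbrs {n : ℕ} {G : SimpleGraph (Fin n)} {v u : Fin n} :
    u ∈ nbrs n G v ↔ G.Adj v u := by
  simp [nbrs]

/-- the window lemma: a dollar-free window of length `Lw` in a concatenation of
`$ inner $` blocks with inners of length at most `Lw` must be exactly one inner. -/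
lemma window_lemma {Lw : ℕ} (hLw : 1 ≤ Lw) (Pb : List RCore → Prop) :
    ∀ (bs : List (List RCore)),
    (∀ b ∈ bs, ∃ inn, b = dol :: (inn ++ [dol]) ∧ inn.length ≤ Lw ∧ Pb inn) →
    ∀ m : ℕ, m + Lw ≤ bs.flatten.length →
    (∀ r < Lw, isD (bs.flatten.getD (m + r) dol) = false) →
    ∃ inn, Pb inn ∧ inn.length = Lw ∧
      (∀ r < Lw, bs.flatten.getD (m + r) dol = inn.getD r dol) ∧
      (m + Lw = bs.flatten.length ∨ isD (bs.flatten.getD (m + Lw) dol) = true) := by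
  intro bs
  induction bs with
  | nil => intro _ m hm _; simp at hm; omega
  | cons b bs ih =>
    intro hb m hm hfree
    obtain ⟨inn, hbe, hlen, hPb⟩ := hb b (by simp)
    have hblen : b.length = inn.length + 2 := by rw [hbe]; simp
    have hflat : (b :: bs).flatten = b ++ bs.flatten := by simp
    rcases Nat.lt_or_ge m b.length with hcase | hcase
    · -- window starts inside b
      have hm0 : m ≠ 0 := by
        intro h0
        have := hfree 0 (by omega)
        rw [hflat, h0] at this
        rw [List.getD_append _ _ _ _ (by omega)] at this
        rw [hbe] at this
        simp [isD, dol] at this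
      have hup : m + Lw ≤ inn.length + 1 := by
        by_contra hcon
        push_neg at hcon
        have hr : inn.length + 1 - m < Lw := by omega
        have := hfree (inn.length + 1 - m) hr
        have hidx : m + (inn.length + 1 - m) = inn.length + 1 := by omega
        rw [hflat, hidx, List.getD_append _ _ _ _ (by omega), hbe] at this
        rw [List.getD_cons_succ, List.getD_append_right _ _ _ _ (le_refl _)] at this
        simp [isD, dol] at this
      have hm1 : m = 1 := by omega
      have hinnlen : inn.length = Lw := by omega
      refine ⟨inn, hPb, hinnlen, ?_, ?_⟩
      · intro r hr
        rw [hflat, List.getD_append _ _ _ _ (by omega), hbe, hm1,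
          show (1 : ℕ) + r = r + 1 from by omega, List.getD_cons_succ]
        rw [List.getD_append _ _ _ _ (by omega)]
      · right
        rw [hflat, hm1, List.getD_append _ _ _ _ (by omega), hbe,
          show (1 : ℕ) + Lw = Lw + 1 from by omega, List.getD_cons_succ]
        rw [List.getD_append_right _ _ _ _ (by omega)]
        have : Lw - inn.length = 0 := by omega
        rw [this]
        simp [isD, dol]
    · -- window inside the tail
      have hb' : ∀ b' ∈ bs, ∃ inn, b' = dol :: (inn ++ [dol]) ∧ inn.length ≤ Lw ∧ Pb inn :=
        fun b' h => hb b' (by simp [h])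
      have hlen' : (m - b.length) + Lw ≤ bs.flatten.length := by
        rw [hflat, List.length_append] at hm; omega
      have hfree' : ∀ r < Lw, isD (bs.flatten.getD ((m - b.length) + r) dol) = false := by
        intro r hr
        have := hfree r hr
        rw [hflat, List.getD_append_right _ _ _ _ (by omega)] at this
        have hidx : m + r - b.length = (m - b.length) + r := by omega
        rwa [hidx] at this
      obtain ⟨inn', hP', hl', hval', hbd'⟩ := ih hb' (m - b.length) hlen' hfree'
      refine ⟨inn', hP', hl', ?_, ?_⟩
      · intro r hr
        rw [hflat, List.getD_append_right _ _ _ _ (by omega)]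
        have hidx : m + r - b.length = (m - b.length) + r := by omega
        rw [hidx]; exact hval' r hr
      · rcases hbd' with h | h
        · left; rw [hflat, List.length_append]; omega
        · right
          rw [hflat, List.getD_append_right _ _ _ _ (by omega)]
          have hidx : m + Lw - b.length = (m - b.length) + Lw := by omega
          rwa [hidx]

lemma LGr_window {n : ℕ} {G : SimpleGraph (Fin n)} {v : Fin n} (hn : 1 ≤ LL n) {m : ℕ}
    (hm : m + LL n ≤ (LGr n G v).length)
    (hfree : ∀ r < LL n, isD ((LGr n G v).getD (m + r) dol) = false) :
    ∃ u' : Fin n, G.Adj v u' ∧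
      (∀ r < LL n, (LGr n G v).getD (m + r) dol = (bin n u').getD r dol) ∧
      (m + LL n = (LGr n G v).length ∨ isD ((LGr n G v).getD (m + LL n) dol) = true) := by
  classical
  set bs : List (List RCore) := (nbrs n G v).map (fun u' => [dol] ++ bin n u' ++ [dol]) ++
    (nonNbrs n G v).map (fun _ => [dol, dol]) with hbs
  have hLG : LGr n G v = bs.flatten := by
    rw [LGr, hbs, List.flatten_append]
    congr 1
  have hb : ∀ b ∈ bs, ∃ inn, b = dol :: (inn ++ [dol]) ∧ inn.length ≤ LL n ∧
      (inn = [] ∨ ∃ u' : Fin n, G.Adj v u' ∧ inn = bin n u') := by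
    intro b hbmem
    rw [hbs] at hbmem
    simp only [List.mem_append, List.mem_map] at hbmem
    rcases hbmem with ⟨u', hu', rfl⟩ | ⟨u', hu', rfl⟩
    · exact ⟨bin n u', rfl, by rw [length_bin], Or.inr ⟨u', mem_nbrs.1 hu', rfl⟩⟩
    · exact ⟨[], rfl, by simp, Or.inl rfl⟩
  rw [hLG] at hm hfree ⊢
  obtain ⟨inn, hP, hl, hval, hbd⟩ := window_lemma hn _ bs hb m hm hfree
  rcases hP with rfl | ⟨u', hadj, rfl⟩
  · simp at hl; omega
  · exact ⟨u', hadj, fun r hr => hval r hr, hbd⟩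

lemma key_upper (n k : ℕ) (G : SimpleGraph (Fin n)) (xy : PT) (u v : Fin n)
    (A : Finset (ℕ × ℕ)) (hA : IsFolding (markStr xy (Tstr n G u v)) A) :
    ∃ a b : ℕ, a ≤ 2 * n ∧ b ≤ LL n ∧
      (∑ p ∈ A, ((markStr xy (Tstr n G u v)).map
          (Sum.elim (wt n k) (wt n k))).getD p.1 0) = a * Wd n + b ∧
      (2 ≤ n → a = 2 * n → b = LL n → G.Adj v u) := by
  classical
  set T := Tstr n G u v with hTdef
  set S := markStr xy T with hSdef
  set M := 4 * n + LL n with hMdef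
  have hlenS : S.length = T.length := by rw [hSdef]; simp [markStr]
  have hlenT : T.length = M + (LGr n G v).length := length_Tstr n G u v
  have hlenN : (NGr n u).length = M := length_NGr n u
  -- the right part of T
  have hright : ∀ j, M ≤ j → j < T.length →
      T.getD j dol = pr1 ((LGr n G v).getD (T.length - 1 - j) dol) ∧
        T.length - 1 - j < (LGr n G v).length := by
    intro j h1 h2
    have hm : T.length - 1 - j < (LGr n G v).length := by omega
    have heq := Tstr_getD_right (n := n) (G := G) (u := u) (v := v)
      (m := T.length - 1 - j) hm
    have hidx : 4 * n + LL n + ((LGr n G v).length - 1 - (T.length - 1 - j)) = j := by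
      omega
    rw [hidx] at heq
    exact ⟨heq, hm⟩
  -- primedness of positions
  have hfstT : ∀ i, i < T.length → ((T.getD i dol).1 = false ↔ i < M) := by
    intro i hi
    rcases Nat.lt_or_ge i M with h | h
    · rw [Tstr_getD_left (by omega)]
      have hmem : (NGr n u).getD i dol ∈ NGr n u := by
        rw [List.getD_eq_getElem _ _ (by omega)]
        exact List.getElem_mem _
      exact iff_of_true (mem_NGr_cases hmem).1 h
    · rw [(hright i h hi).1]
      have hm := (hright i h hi).2
      have hmem : (LGr n G v).getD (T.length - 1 - i) dol ∈ LGr n G v := by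
        rw [List.getD_eq_getElem _ _ hm]
        exact List.getElem_mem _
      have hfalse := mem_LGr_cases hmem
      refine iff_of_false ?_ (by omega)
      intro hcontra
      rw [show (pr1 ((LGr n G v).getD (T.length - 1 - i) dol)).1
          = !((LGr n G v).getD (T.length - 1 - i) dol).1 from rfl, hfalse] at hcontra
      exact absurd hcontra (by simp)
  -- structure of pairs
  have hstruct : ∀ p ∈ A, p.1 < M ∧ M ≤ p.2 ∧ p.2 < T.length ∧
      (T.getD p.1 dol).2 = (T.getD p.2 dol).2 := by
    intro p hp
    obtain ⟨h12, h2len, x, hx, y, hy, hxy⟩ := hA.1 p hp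
    rw [hlenS] at h2len
    rw [hSdef, markStr_getElem? xy T (by omega)] at hx
    rw [hSdef, markStr_getElem? xy T (by omega)] at hy
    simp only [Option.mem_def, Option.some.injEq] at hx hy
    subst hx; subst hy
    rw [lmatches_mark_iff] at hxy
    obtain ⟨hne, heq⟩ := hxy
    have hf1 := hfstT p.1 (by omega)
    have hf2 := hfstT p.2 (by omega)
    rcases Nat.lt_or_ge p.1 M with h1 | h1
    · rcases Nat.lt_or_ge p.2 M with h2 | h2
      · rw [hf1.2 h1, hf2.2 h2] at hne; exact absurd rfl hne
      · exact ⟨h1, h2, h2len, heq⟩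
    · have hb1 : (T.getD p.1 dol).1 = true := by
        by_contra hbc
        simp only [Bool.not_eq_true] at hbc
        have := hf1.1 hbc; omega
      have hb2 : (T.getD p.2 dol).1 = true := by
        by_contra hbc
        simp only [Bool.not_eq_true] at hbc
        have := hf2.1 hbc; omega
      rw [hb1, hb2] at hne; exact absurd rfl hne
  -- injectivity of endpoints
  have hfst_inj : ∀ p ∈ A, ∀ q ∈ A, p.1 = q.1 → p = q := by
    intro p hp q hq h
    by_contra h'
    exact hA.2 p hp q hq h' (Or.inl h)
  have hsnd_inj : ∀ p ∈ A, ∀ q ∈ A, p.2 = q.2 → p = q := by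
    intro p hp q hq h
    by_contra h'
    exact hA.2 p hp q hq h' (Or.inr (Or.inr (Or.inr (Or.inl h))))
  -- monotonicity
  have hmono : ∀ p ∈ A, ∀ q ∈ A, p.1 < q.1 → q.2 < p.2 := by
    intro p hp q hq h
    have hpq : p ≠ q := fun h' => by rw [h'] at h; omega
    have hnc := hA.2 p hp q hq hpq
    have h1 := hstruct p hp
    have h2 := hstruct q hq
    by_contra h'
    exact hnc (by unfold Crosses; omega)
  have hmono' : ∀ p ∈ A, ∀ q ∈ A, p.2 < q.2 → q.1 < p.1 := by
    intro p hp q hq h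
    rcases Nat.lt_trichotomy q.1 p.1 with h' | h' | h'
    · exact h'
    · rw [hfst_inj p hp q hq h'.symm] at h; omega
    · have := hmono p hp q hq h'; omega
  -- the two classes of pairs
  set Ad := A.filter (fun p => isD (T.getD p.1 dol) = true) with hAd
  set Ab := A.filter (fun p => ¬ isD (T.getD p.1 dol) = true) with hAb
  refine ⟨Ad.card, Ab.card, ?_, ?_, ?_, ?_⟩
  · -- Ad.card ≤ 2n
    have hinj : Set.InjOn (fun p : ℕ × ℕ => p.2 - M) Ad := by
      intro p hp q hq h
      simp only [Finset.mem_coe, hAd, Finset.mem_filter] at hp hq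
      have h1 := hstruct p hp.1
      have h2 := hstruct q hq.1
      have h' : p.2 - M = q.2 - M := h
      exact hsnd_inj p hp.1 q hq.1 (by omega)
    have hsub : Ad.image (fun p => p.2 - M) ⊆
        (Finset.range ((primeStr (LGr n G v)).reverse.length)).filter
          (fun t => isD ((primeStr (LGr n G v)).reverse.getD t dol)) := by
      intro t ht
      simp only [Finset.mem_image] at ht
      obtain ⟨p, hp, rfl⟩ := ht
      simp only [hAd, Finset.mem_filter] at hp
      obtain ⟨hpA, hdol⟩ := hp
      have h1 := hstruct p hpA
      have hQ : T.getD p.2 dol = (primeStr (LGr n G v)).reverse.getD (p.2 - M) dol := by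
        rw [hTdef, Tstr, List.getD_append_right _ _ _ _ (by rw [hlenN]; exact h1.2.1)]
        rw [hlenN]
      simp only [Finset.mem_filter, Finset.mem_range]
      constructor
      · simp only [primeStr_eq_map, List.length_reverse, List.length_map]
        omega
      · rw [← hQ]
        simp only [isD] at hdol ⊢
        rw [← h1.2.2.2]
        exact hdol
    have hcard2 : ((Finset.range ((primeStr (LGr n G v)).reverse.length)).filter
        (fun t => isD ((primeStr (LGr n G v)).reverse.getD t dol))).card = 2 * n := by
      rw [card_filter_range_getD isD dol, List.countP_reverse, primeStr_eq_map,
        List.countP_map]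
      have : (isD ∘ pr1) = isD := by funext c; rfl
      rw [this, countP_isD_LGr]
    calc Ad.card = (Ad.image (fun p => p.2 - M)).card :=
          (Finset.card_image_of_injOn hinj).symm
      _ ≤ _ := Finset.card_le_card hsub
      _ = 2 * n := hcard2
  · -- Ab.card ≤ LL n
    have hinj : Set.InjOn (fun p : ℕ × ℕ => p.1) Ab := by
      intro p hp q hq h
      simp only [Finset.mem_coe, hAb, Finset.mem_filter] at hp hq
      exact hfst_inj p hp.1 q hq.1 h
    have hsub : Ab.image (fun p => p.1) ⊆
        (Finset.range ((NGr n u).length)).filter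
          (fun i => !(isD ((NGr n u).getD i dol))) := by
      intro i hi
      simp only [Finset.mem_image] at hi
      obtain ⟨p, hp, rfl⟩ := hi
      simp only [hAb, Finset.mem_filter] at hp
      obtain ⟨hpA, hdol⟩ := hp
      have h1 := hstruct p hpA
      simp only [Finset.mem_filter, Finset.mem_range]
      refine ⟨by omega, ?_⟩
      rw [← Tstr_getD_left (by omega : p.1 < 4 * n + LL n)]
      simpa using hdol
    have hcard2 : ((Finset.range ((NGr n u).length)).filter
        (fun i => !(isD ((NGr n u).getD i dol)))).card = LL n := by
      rw [card_filter_range_getD (fun c => !isD c) dol (NGr n u), countP_not_isD_NGr]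
    calc Ab.card = (Ab.image (fun p => p.1)).card :=
          (Finset.card_image_of_injOn hinj).symm
      _ ≤ _ := Finset.card_le_card hsub
      _ = LL n := hcard2
  · -- the sum
    have hf : ∀ p ∈ A, (S.map (Sum.elim (wt n k) (wt n k))).getD p.1 0
        = wt n k (.mk ((T.getD p.1 dol).2) xy) := by
      intro p hp
      have h1 := hstruct p hp
      have hp1 : p.1 < (S.map (Sum.elim (wt n k) (wt n k))).length := by
        rw [List.length_map, hlenS]; omega
      rw [List.getD_eq_getElem _ _ hp1, List.getElem_map]
      have : S[p.1] = mark xy (T.getD p.1 dol) := by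
        have := markStr_getElem? xy T (i := p.1) (by omega)
        rw [← hSdef] at this
        have h2 := List.getElem?_eq_getElem (by rw [hlenS]; omega : p.1 < S.length)
        rw [h2] at this
        exact Option.some.inj this
      rw [this, elim_wt_mark]
    rw [← Finset.sum_filter_add_sum_filter_not A (fun p => isD (T.getD p.1 dol) = true)]
    rw [← hAd, ← hAb]
    have hsumd : ∑ p ∈ Ad, (S.map (Sum.elim (wt n k) (wt n k))).getD p.1 0
        = Ad.card * Wd n := by
      rw [Finset.sum_congr rfl (fun p hp => ?_), Finset.sum_const, smul_eq_mul]
      simp only [hAd, Finset.mem_filter] at hp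
      rw [hf p hp.1]
      have : (T.getD p.1 dol).2 = RBase.dollar := of_decide_eq_true hp.2
      rw [this]
      rfl
    have hsumb : ∑ p ∈ Ab, (S.map (Sum.elim (wt n k) (wt n k))).getD p.1 0
        = Ab.card := by
      rw [Finset.sum_congr rfl (fun p hp => ?_), Finset.sum_const, smul_eq_mul, mul_one]
      simp only [hAb, Finset.mem_filter] at hp
      rw [hf p hp.1]
      have h1 := hstruct p hp.1
      have hmem : (T.getD p.1 dol) ∈ NGr n u := by
        rw [Tstr_getD_left (by omega : p.1 < 4 * n + LL n),
          List.getD_eq_getElem _ _ (by omega)]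
        exact List.getElem_mem _
      rcases (mem_NGr_cases hmem).2 with h | h | h
      · exact absurd (decide_eq_true h) hp.2
      · rw [h]; rfl
      · rw [h]; rfl
    rw [hsumd, hsumb]
  · -- the hard implication
    intro hn2 hcard_d hcard_b
    have hL1 : 1 ≤ LL n := by
      have := Nat.clog_pos (b := 2) (by norm_num) hn2
      rw [LL]; omega
    set L := LL n with hLdef
    -- surjectivity onto dollar positions of the right part
    have hDQ : ∀ j, M ≤ j → j < T.length → isD (T.getD j dol) = true →
        ∃ q ∈ A, q.2 = j ∧ isD (T.getD q.1 dol) = true := by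
      intro j hj1 hj2 hjdol
      have hinj : Set.InjOn (fun p : ℕ × ℕ => p.2 - M) Ad := by
        intro p hp q hq h
        simp only [Finset.mem_coe, hAd, Finset.mem_filter] at hp hq
        have h1 := hstruct p hp.1
        have h2 := hstruct q hq.1
        have h' : p.2 - M = q.2 - M := h
        exact hsnd_inj p hp.1 q hq.1 (by omega)
      have hsub : Ad.image (fun p => p.2 - M) ⊆
          (Finset.range ((primeStr (LGr n G v)).reverse.length)).filter
            (fun t => isD ((primeStr (LGr n G v)).reverse.getD t dol)) := by
        intro t ht
        simp only [Finset.mem_image] at ht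
        obtain ⟨p, hp, rfl⟩ := ht
        simp only [hAd, Finset.mem_filter] at hp
        obtain ⟨hpA, hdol⟩ := hp
        have h1 := hstruct p hpA
        have hQ : T.getD p.2 dol = (primeStr (LGr n G v)).reverse.getD (p.2 - M) dol := by
          rw [hTdef, Tstr, List.getD_append_right _ _ _ _ (by rw [hlenN]; exact h1.2.1)]
          rw [hlenN]
        simp only [Finset.mem_filter, Finset.mem_range]
        constructor
        · simp only [primeStr_eq_map, List.length_reverse, List.length_map]
          omega
        · rw [← hQ]
          simp only [isD] at hdol ⊢
          rw [← h1.2.2.2]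
          exact hdol
      have hcard2 : ((Finset.range ((primeStr (LGr n G v)).reverse.length)).filter
          (fun t => isD ((primeStr (LGr n G v)).reverse.getD t dol))).card = 2 * n := by
        rw [card_filter_range_getD isD dol, List.countP_reverse, primeStr_eq_map,
          List.countP_map]
        have : (isD ∘ pr1) = isD := by funext c; rfl
        rw [this, countP_isD_LGr]
      have himg : Ad.image (fun p => p.2 - M)
          = (Finset.range ((primeStr (LGr n G v)).reverse.length)).filter
            (fun t => isD ((primeStr (LGr n G v)).reverse.getD t dol)) :=
        Finset.eq_of_subset_of_card_le hsub
          (by rw [hcard2, Finset.card_image_of_injOn hinj, hcard_d])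
      have hQj : T.getD j dol = (primeStr (LGr n G v)).reverse.getD (j - M) dol := by
        rw [hTdef, Tstr, List.getD_append_right _ _ _ _ (by rw [hlenN]; exact hj1)]
        rw [hlenN]
      have hjmem : j - M ∈ (Finset.range ((primeStr (LGr n G v)).reverse.length)).filter
          (fun t => isD ((primeStr (LGr n G v)).reverse.getD t dol)) := by
        simp only [Finset.mem_filter, Finset.mem_range]
        constructor
        · simp only [primeStr_eq_map, List.length_reverse, List.length_map]
          omega
        · rw [← hQj]; exact hjdol
      rw [← himg] at hjmem
      simp only [Finset.mem_image] at hjmem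
      obtain ⟨q, hq, hqeq⟩ := hjmem
      simp only [hAd, Finset.mem_filter] at hq
      have h1 := hstruct q hq.1
      exact ⟨q, hq.1, by omega, hq.2⟩
    -- surjectivity onto bit positions of the left part
    have hDP : ∀ r, r < L → ∃ p ∈ A, p.1 = 2 * n + r ∧ ¬ isD (T.getD p.1 dol) = true := by
      intro r hr
      have hinj : Set.InjOn (fun p : ℕ × ℕ => p.1) Ab := by
        intro p hp q hq h
        simp only [Finset.mem_coe, hAb, Finset.mem_filter] at hp hq
        exact hfst_inj p hp.1 q hq.1 h
      have hsub : Ab.image (fun p => p.1) ⊆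
          (Finset.range ((NGr n u).length)).filter
            (fun i => !(isD ((NGr n u).getD i dol))) := by
        intro i hi
        simp only [Finset.mem_image] at hi
        obtain ⟨p, hp, rfl⟩ := hi
        simp only [hAb, Finset.mem_filter] at hp
        obtain ⟨hpA, hdol⟩ := hp
        have h1 := hstruct p hpA
        simp only [Finset.mem_filter, Finset.mem_range]
        refine ⟨by omega, ?_⟩
        rw [← Tstr_getD_left (by omega : p.1 < 4 * n + LL n)]
        simpa using hdol
      have hcard2 : ((Finset.range ((NGr n u).length)).filter
          (fun i => !(isD ((NGr n u).getD i dol)))).card = LL n := by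
        rw [card_filter_range_getD (fun c => !isD c) dol (NGr n u), countP_not_isD_NGr]
      have himg : Ab.image (fun p => p.1)
          = (Finset.range ((NGr n u).length)).filter
            (fun i => !(isD ((NGr n u).getD i dol))) :=
        Finset.eq_of_subset_of_card_le hsub
          (by rw [hcard2, Finset.card_image_of_injOn hinj, hcard_b])
      have hmem : 2 * n + r ∈ (Finset.range ((NGr n u).length)).filter
          (fun i => !(isD ((NGr n u).getD i dol))) := by
        simp only [Finset.mem_filter, Finset.mem_range]
        refine ⟨by omega, ?_⟩
        rw [NGr_getD_bit (by omega : r < LL n)]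
        rcases hb : (u : ℕ).testBit r <;> simp [hb, isD]
      rw [← himg] at hmem
      simp only [Finset.mem_image] at hmem
      obtain ⟨p, hp, hpeq⟩ := hmem
      simp only [hAb, Finset.mem_filter] at hp
      exact ⟨p, hp.1, hpeq, hp.2⟩
    choose pf hpfA hpf1 hpfd using hDP
    have h0L : 0 < L := hL1
    set jf : ℕ → ℕ := fun r => if hr : r < L then (pf r hr).2 else 0 with hjfdef
    have hjf : ∀ r (hr : r < L), jf r = (pf r hr).2 := fun r hr => dif_pos hr
    have hjfr : ∀ r (hr : r < L), M ≤ jf r ∧ jf r < T.length ∧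
        (T.getD (jf r) dol).2 = (T.getD (2 * n + r) dol).2 := by
      intro r hr
      have h1 := hstruct _ (hpfA r hr)
      rw [hjf r hr]
      exact ⟨h1.2.1, h1.2.2.1, by rw [← h1.2.2.2, hpf1 r hr]⟩
    have hjmono : ∀ r r' (hr : r < L) (hr' : r' < L), r < r' → jf r' < jf r := by
      intro r r' hr hr' hlt
      rw [hjf r hr, hjf r' hr']
      apply hmono _ (hpfA r hr) _ (hpfA r' hr')
      rw [hpf1 r hr, hpf1 r' hr']
      omega
    -- unique pair with given second coordinate
    have huniq : ∀ q ∈ A, ∀ r (hr : r < L), q.2 = jf r → q = pf r hr := by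
      intro q hq r hr h
      exact hsnd_inj q hq _ (hpfA r hr) (by rw [h, hjf r hr])
    -- no dollar between the matched bit positions (in T coordinates)
    have hfreeT : ∀ x, jf (L - 1) ≤ x → x ≤ jf 0 → isD (T.getD x dol) = false := by
      intro x hx1 hx2
      by_contra hc
      simp only [Bool.not_eq_false] at hc
      have hxr := hjfr (L - 1) (by omega)
      have hx0 := hjfr 0 h0L
      have hx3 : M ≤ x := le_trans hxr.1 hx1
      have hx4 : x < T.length := lt_of_le_of_lt hx2 hx0.2.1
      obtain ⟨q, hqA, hq2, hqd⟩ := hDQ x hx3 hx4 hc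
      have hqne : ∀ r (hr : r < L), q ≠ pf r hr := by
        intro r hr hq
        apply hpfd r hr
        rw [← hq]
        exact hqd
      have h0 : q.2 < jf 0 := by
        rcases Nat.eq_or_lt_of_le (hq2 ▸ hx2 : q.2 ≤ jf 0) with h | h
        · exact absurd (huniq q hqA 0 h0L h) (hqne 0 h0L)
        · exact h
      have hL0 : jf (L - 1) < q.2 := by
        rcases Nat.eq_or_lt_of_le (hq2 ▸ hx1 : jf (L - 1) ≤ q.2) with h | h
        · exact absurd (huniq q hqA (L - 1) (by omega) h.symm) (hqne (L - 1) (by omega))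
        · exact h
      have hgt : 2 * n < q.1 := by
        have := hmono' q hqA (pf 0 h0L) (hpfA 0 h0L) (by rw [← hjf 0 h0L]; exact h0)
        rw [hpf1 0 h0L] at this
        omega
      have hlt : q.1 < 2 * n + (L - 1) := by
        have := hmono' (pf (L - 1) (by omega)) (hpfA (L - 1) (by omega)) q hqA
          (by rw [← hjf (L - 1) (by omega)]; exact hL0)
        rw [hpf1 (L - 1) (by omega)] at this
        omega
      have hrlt : q.1 - 2 * n < L := by omega
      apply hqne (q.1 - 2 * n) hrlt
      apply hfst_inj q hqA _ (hpfA _ hrlt)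
      rw [hpf1 _ hrlt]
      omega
    -- translate to LG coordinates
    set mf : ℕ → ℕ := fun r => T.length - 1 - jf r with hmfdef
    have hmfr : ∀ r (hr : r < L), mf r < (LGr n G v).length ∧
        ((LGr n G v).getD (mf r) dol).2
          = (if (u : ℕ).testBit r then RBase.b1 else RBase.b0) := by
      intro r hr
      have h1 := hjfr r hr
      have h2 := hright (jf r) h1.1 h1.2.1
      refine ⟨h2.2, ?_⟩
      have h3 : ((LGr n G v).getD (mf r) dol).2 = (T.getD (jf r) dol).2 := by
        rw [h2.1]; rfl
      rw [h3, h1.2.2, Tstr_getD_left (by omega : 2 * n + r < 4 * n + LL n)]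
      rw [NGr_getD_bit (by omega : r < LL n)]
    have hmfmono : ∀ i, i + 1 < L → mf i < mf (i + 1) := by
      intro i hi
      have h1 := hjfr i (by omega)
      have h2 := hjfr (i + 1) hi
      have := hjmono i (i + 1) (by omega) hi (by omega)
      simp only [hmfdef]
      omega
    have hgap := add_le_of_step (m := L) hmfmono
    have hfreeLG : ∀ y, mf 0 ≤ y → y ≤ mf (L - 1) → isD ((LGr n G v).getD y dol) = false := by
      intro y hy1 hy2
      have h0 := hjfr 0 h0L
      have hl := hjfr (L - 1) (by omega)
      have hx1 : jf (L - 1) ≤ T.length - 1 - y := by simp only [hmfdef] at hy2 ⊢; omega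
      have hx2 : T.length - 1 - y ≤ jf 0 := by simp only [hmfdef] at hy1 ⊢; omega
      have := hfreeT _ hx1 hx2
      have hxM : M ≤ T.length - 1 - y := le_trans hl.1 hx1
      have hxlen : T.length - 1 - y < T.length := lt_of_le_of_lt hx2 h0.2.1
      have h2 := hright _ hxM hxlen
      have hyy : T.length - 1 - (T.length - 1 - y) = y := by
        simp only [hmfdef] at hy2
        omega
      rw [h2.1, hyy] at this
      exact this
    have hwin : mf 0 + L ≤ (LGr n G v).length := by
      have h1 := (hmfr 0 h0L).1
      have h2 := (hmfr (L - 1) (by omega)).1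
      have h3 := hgap (L - 1) 0 (by omega) (by omega)
      omega
    obtain ⟨u', hadj, hval, hbd⟩ := LGr_window hL1 (m := mf 0) hwin
      (fun r hr => hfreeLG (mf 0 + r)
        (by omega)
        (by have := hgap (L - 1) 0 (by omega) (by omega); omega))
    have hup : mf (L - 1) < mf 0 + L := by
      by_contra hcon
      push_neg at hcon
      rcases hbd with h | h
      · have := (hmfr (L - 1) (by omega)).1
        omega
      · have h2 := hfreeLG (mf 0 + LL n) (by omega) (by omega)
        rw [h2] at h
        exact Bool.false_ne_true h
    have hmfeq : ∀ r, r < L → mf r = mf 0 + r := by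
      intro r hr
      have h1 := hgap r 0 (by omega) hr
      have h2 := hgap (L - 1) r (by omega) (by omega)
      omega
    have hbit : ∀ r, r < L → (u : ℕ).testBit r = (u' : ℕ).testBit r := by
      intro r hr
      have h1 := (hmfr r hr).2
      rw [hmfeq r hr] at h1
      have h2 := congrArg (fun c : RCore => c.2) (hval r (by omega : r < LL n))
      rw [bin_getD (by omega : r < LL n)] at h2
      rw [h1] at h2
      rcases hu1 : (u : ℕ).testBit r <;> rcases hu2 : (u' : ℕ).testBit r <;>
        rw [hu1, hu2] at h2 <;> simp at h2
    have huu : u = u' := by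
      apply Fin.ext
      apply Nat.eq_of_testBit_eq
      intro i
      rcases Nat.lt_or_ge i L with hi | hi
      · exact hbit i hi
      · have hn2pow : n ≤ 2 ^ i := by
          calc n ≤ 2 ^ Nat.clog 2 n := Nat.le_pow_clog (by norm_num) n
            _ ≤ 2 ^ i := Nat.pow_le_pow_right (by norm_num) (by have : L = 2 * Nat.clog 2 n := hLdef.trans rfl; omega)
        rw [Nat.testBit_eq_false_of_lt (lt_of_lt_of_le u.isLt hn2pow),
          Nat.testBit_eq_false_of_lt (lt_of_lt_of_le u'.isLt hn2pow)]
    rw [huu]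
    exact hadj

lemma key_lower (n k : ℕ) (G : SimpleGraph (Fin n)) (xy : PT) (u v : Fin n)
    (hadj : G.Adj v u) :
    2 * n * Wd n + LL n ≤ WRNA (wt n k) (markStr xy (Tstr n G u v)) := by
  classical
  have hn1 : 1 ≤ n := by
    rcases Nat.eq_zero_or_pos n with h | h
    · subst h; exact u.elim0
    · exact h
  obtain ⟨l₁, l₂, hnb⟩ := List.append_of_mem (mem_nbrs.2 hadj)
  set L := LL n with hLdef
  set X : List RCore := l₁.flatMap (fun u' => [dol] ++ bin n u' ++ [dol]) with hXdef
  set Y : List RCore := l₂.flatMap (fun u' => [dol] ++ bin n u' ++ [dol]) ++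
    (nonNbrs n G v).flatMap (fun _ => [dol, dol]) with hYdef
  have hLG : LGr n G v = X ++ ([dol] ++ (bin n u ++ ([dol] ++ Y))) := by
    rw [LGr, hnb, List.flatMap_append, List.flatMap_cons]
    simp [hXdef, hYdef, List.append_assoc]
  set x := X.length with hxdef
  set c₁ := X.countP isD with hc1def
  set c₂ := Y.countP isD with hc2def
  have hcc : c₁ + c₂ + 2 = 2 * n := by
    have h := countP_isD_LGr n G v
    rw [hLG] at h
    simp only [List.countP_append] at h
    have hbin := countP_isD_bin n u
    have hdol : List.countP isD [dol] = 1 := by simp [isD, dol]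
    omega
  have hLGlen : (LGr n G v).length = x + 1 + L + 1 + Y.length := by
    rw [hLG]
    simp [length_bin]
    omega
  -- enumerate the dollars of X and Y
  set DX := (Finset.range X.length).filter (fun i => isD (X.getD i dol)) with hDXdef
  have hDXcard : DX.card = c₁ := by rw [hDXdef, card_filter_range_getD]
  set e1 := DX.orderEmbOfFin hDXcard with he1def
  have he1 : ∀ t : Fin c₁, (e1 t : ℕ) < X.length ∧ isD (X.getD (e1 t) dol) = true := by
    intro t
    have h : (e1 t : ℕ) ∈ (Finset.range X.length).filter
        (fun i => isD (X.getD i dol)) := Finset.orderEmbOfFin_mem DX hDXcard t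
    simp only [Finset.mem_filter, Finset.mem_range] at h
    exact h
  set DY := (Finset.range Y.length).filter (fun i => isD (Y.getD i dol)) with hDYdef
  have hDYcard : DY.card = c₂ := by rw [hDYdef, card_filter_range_getD]
  set e2 := DY.orderEmbOfFin hDYcard with he2def
  have he2 : ∀ t : Fin c₂, (e2 t : ℕ) < Y.length ∧ isD (Y.getD (e2 t) dol) = true := by
    intro t
    have h : (e2 t : ℕ) ∈ (Finset.range Y.length).filter
        (fun i => isD (Y.getD i dol)) := Finset.orderEmbOfFin_mem DY hDYcard t
    simp only [Finset.mem_filter, Finset.mem_range] at h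
    exact h
  -- positions in LG
  have hget0 : (LGr n G v).getD x dol = dol := by
    rw [hLG, List.getD_append_right _ _ _ _ (by omega),
      show x - X.length = 0 from by omega]
    rfl
  have hgetX : ∀ t : Fin c₁, (LGr n G v).getD (e1 t) dol = X.getD (e1 t) dol := by
    intro t
    rw [hLG, List.getD_append _ _ _ _ (he1 t).1]
  have hgetbit : ∀ r, r < L → (LGr n G v).getD (x + 1 + r) dol = (bin n u).getD r dol := by
    intro r hr
    rw [hLG, List.getD_append_right _ _ _ _ (by omega)]
    rw [show x + 1 + r - X.length = r + 1 from by omega, List.singleton_append,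
      List.getD_cons_succ]
    rw [List.getD_append _ _ _ _ (by rw [length_bin]; exact hr)]
  have hgetdol2 : (LGr n G v).getD (x + 1 + L) dol = dol := by
    rw [hLG, List.getD_append_right _ _ _ _ (by omega)]
    rw [show x + 1 + L - X.length = L + 1 from by omega, List.singleton_append,
      List.getD_cons_succ]
    rw [List.getD_append_right _ _ _ _ (by rw [length_bin])]
    rw [show L - (bin n u).length = 0 from by rw [length_bin]; omega]
    rfl
  have hgetY : ∀ s, s < Y.length → (LGr n G v).getD (x + 1 + L + 1 + s) dol
      = Y.getD s dol := by
    intro s hs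
    rw [hLG, List.getD_append_right _ _ _ _ (by omega)]
    rw [show x + 1 + L + 1 + s - X.length = (L + 1 + s) + 1 from by omega,
      List.singleton_append, List.getD_cons_succ]
    rw [List.getD_append_right _ _ _ _ (by rw [length_bin]; omega)]
    rw [show L + 1 + s - (bin n u).length = s + 1 from by rw [length_bin]; omega,
      List.singleton_append, List.getD_cons_succ]
  -- the matching functions
  set gf : ℕ → ℕ := fun i =>
    if h : i < c₁ then e1 ⟨i, h⟩
    else if i ≤ c₁ + L then x + (i - c₁)
    else if i = c₁ + L + 1 then x + 1 + L
    else if h : i - (c₁ + L + 2) < c₂ then x + 1 + L + 1 + e2 ⟨i - (c₁ + L + 2), h⟩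
    else 0 with hgfdef
  set ff : ℕ → ℕ := fun i =>
    if i ≤ c₁ then 2 * n - 1 - c₁ + i
    else if i ≤ c₁ + L then 2 * n + (i - (c₁ + 1))
    else 2 * n + L + (i - (c₁ + L + 1)) with hffdef
  have hgfa : ∀ i (h : i < c₁), gf i = e1 ⟨i, h⟩ := by
    intro i h
    simp only [hgfdef]
    rw [dif_pos h]
  have hgfb : ∀ i, c₁ ≤ i → i ≤ c₁ + L → gf i = x + (i - c₁) := by
    intro i h1 h2
    simp only [hgfdef]
    rw [dif_neg (by omega), if_pos h2]
  have hgfc : gf (c₁ + L + 1) = x + 1 + L := by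
    simp only [hgfdef]
    rw [dif_neg (by omega), if_neg (by omega)]
    simp
  have hgfd : ∀ i (h : i - (c₁ + L + 2) < c₂), c₁ + L + 1 < i →
      gf i = x + 1 + L + 1 + e2 ⟨i - (c₁ + L + 2), h⟩ := by
    intro i h hgt
    simp only [hgfdef]
    rw [dif_neg (by omega), if_neg (by omega), if_neg (by omega), dif_pos h]
  have hffa : ∀ i, i ≤ c₁ → ff i = 2 * n - 1 - c₁ + i := by
    intro i h
    simp only [hffdef]
    rw [if_pos h]
  have hffb : ∀ i, c₁ < i → i ≤ c₁ + L → ff i = 2 * n + (i - (c₁ + 1)) := by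
    intro i h1 h2
    simp only [hffdef]
    rw [if_neg (by omega), if_pos h2]
  have hffc : ∀ i, c₁ + L < i → ff i = 2 * n + L + (i - (c₁ + L + 1)) := by
    intro i h
    simp only [hffdef]
    rw [if_neg (by omega), if_neg (by omega)]
  set N := 2 * n + L with hNdef
  -- main pointwise facts
  have hmain : ∀ i, i < N →
      ff i < 4 * n + LL n ∧ gf i < (LGr n G v).length ∧
      ((NGr n u).getD (ff i) dol).2 = ((LGr n G v).getD (gf i) dol).2 ∧
      wt n k (RSig.mk ((NGr n u).getD (ff i) dol).2 xy)
        = (if c₁ + 1 ≤ i ∧ i < c₁ + 1 + L then 1 else Wd n) := by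
    intro i hi
    rcases Nat.lt_or_ge i c₁ with hc | hc
    · -- X dollars
      rw [hffa i (by omega), hgfa i hc]
      have h1 := he1 ⟨i, hc⟩
      have hff : 2 * n - 1 - c₁ + i < 2 * n := by omega
      rw [NGr_getD_lo hff, hgetX ⟨i, hc⟩]
      have hd : (X.getD (e1 ⟨i, hc⟩) dol).2 = RBase.dollar := of_decide_eq_true h1.2
      refine ⟨by omega, by omega, by rw [hd]; rfl, ?_⟩
      rw [if_neg (by omega)]
      rfl
    rcases Nat.eq_or_lt_of_le hc with hc' | hc'
    · -- left block dollar
      rw [hffa i (by omega), hgfb i (by omega) (by omega), ← hc', Nat.sub_self,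
        Nat.add_zero]
      rw [NGr_getD_lo (by omega), hget0]
      refine ⟨by omega, by omega, rfl, ?_⟩
      rw [if_neg (by omega)]
      rfl
    rcases Nat.lt_or_ge i (c₁ + 1 + L) with hm | hm
    · -- bits
      have hr : i - (c₁ + 1) < L := by omega
      rw [hffb i (by omega) (by omega), hgfb i (by omega) (by omega)]
      rw [show x + (i - c₁) = x + 1 + (i - (c₁ + 1)) from by omega]
      rw [NGr_getD_bit (by omega : i - (c₁ + 1) < LL n), hgetbit _ hr,
        bin_getD (by omega : i - (c₁ + 1) < LL n)]
      refine ⟨by omega, by omega, rfl, ?_⟩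
      rw [if_pos (show c₁ + 1 ≤ i ∧ i < c₁ + 1 + L from by omega)]
      rcases hb : (u : ℕ).testBit (i - (c₁ + 1)) <;> simp [hb] <;> rfl
    rcases Nat.eq_or_lt_of_le hm with hm' | hm'
    · -- right block dollar
      rw [hffc i (by omega), show i = c₁ + L + 1 from by omega, hgfc]
      rw [show 2 * n + L + (c₁ + L + 1 - (c₁ + L + 1)) = 2 * n + LL n + 0 from by omega]
      rw [NGr_getD_hi (by omega), hgetdol2]
      refine ⟨by omega, by omega, rfl, ?_⟩
      rw [if_neg (by omega)]
      rfl
    · -- Y dollars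
      have ht : i - (c₁ + L + 2) < c₂ := by omega
      rw [hffc i (by omega), hgfd i ht (by omega)]
      have h2 := he2 ⟨i - (c₁ + L + 2), ht⟩
      rw [show 2 * n + L + (i - (c₁ + L + 1)) = 2 * n + LL n + (i - (c₁ + L + 1)) from rfl]
      rw [NGr_getD_hi (by omega), hgetY _ h2.1]
      have hd : (Y.getD (e2 ⟨i - (c₁ + L + 2), ht⟩) dol).2 = RBase.dollar :=
        of_decide_eq_true h2.2
      refine ⟨by omega, by omega, by rw [hd]; rfl, ?_⟩
      rw [if_neg (by omega)]
      rfl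

  have hn2 : 2 ≤ n := by
    by_contra h
    push_neg at h
    have h1 : n = 1 := by omega
    subst h1
    exact hadj.ne (Subsingleton.elim v u)
  have hL1 : 1 ≤ L := by
    have := Nat.clog_pos (b := 2) (by norm_num) hn2
    rw [hLdef, LL]; omega
  -- step monotonicity
  have hffstep : ∀ i, i + 1 < N → ff i < ff (i + 1) := by
    intro i hstep
    rcases Nat.lt_or_ge (i + 1) (c₁ + 1) with h | h
    · rw [hffa i (by omega), hffa (i + 1) (by omega)]; omega
    rcases Nat.lt_or_ge i (c₁ + 1) with h2 | h2
    · rw [hffa i (by omega), hffb (i + 1) (by omega) (by omega)]; omega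
    rcases Nat.lt_or_ge (i + 1) (c₁ + L + 1) with h3 | h3
    · rw [hffb i (by omega) (by omega), hffb (i + 1) (by omega) (by omega)]; omega
    rcases Nat.lt_or_ge i (c₁ + L + 1) with h4 | h4
    · rw [hffb i (by omega) (by omega), hffc (i + 1) (by omega)]; omega
    · rw [hffc i (by omega), hffc (i + 1) (by omega)]; omega
  have hgfstep : ∀ i, i + 1 < N → gf i < gf (i + 1) := by
    intro i hstep
    have he1m : ∀ (a b : Fin c₁), (a : ℕ) < (b : ℕ) → (e1 a : ℕ) < e1 b := by
      intro a b hab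
      exact e1.strictMono (by exact hab)
    have he2m : ∀ (a b : Fin c₂), (a : ℕ) < (b : ℕ) → (e2 a : ℕ) < e2 b := by
      intro a b hab
      exact e2.strictMono (by exact hab)
    rcases Nat.lt_or_ge (i + 1) c₁ with h | h
    · rw [hgfa i (by omega), hgfa (i + 1) h]
      exact he1m _ _ (by simp)
    rcases Nat.lt_or_ge i c₁ with h2 | h2
    · rw [hgfa i h2, hgfb (i + 1) (by omega) (by omega)]
      have := (he1 ⟨i, h2⟩).1
      omega
    rcases Nat.lt_or_ge (i + 1) (c₁ + L + 1) with h3 | h3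
    · rw [hgfb i (by omega) (by omega), hgfb (i + 1) (by omega) (by omega)]; omega
    rcases Nat.lt_or_ge i (c₁ + L + 1) with h4 | h4
    · rw [hgfb i (by omega) (by omega), show i + 1 = c₁ + L + 1 from by omega, hgfc]
      omega
    rcases Nat.eq_or_lt_of_le h4 with h5 | h5
    · have hi1 : gf i = x + 1 + L := by rw [← h5]; exact hgfc
      rw [hi1, hgfd (i + 1) (by omega) (by omega)]
      omega
    · have ht1 : i - (c₁ + L + 2) < c₂ := by omega
      have ht2 : i + 1 - (c₁ + L + 2) < c₂ := by omega
      rw [hgfd i ht1 (by omega), hgfd (i + 1) ht2 (by omega)]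
      have := he2m ⟨i - (c₁ + L + 2), ht1⟩ ⟨i + 1 - (c₁ + L + 2), ht2⟩ (by simp; omega)
      omega
  have hffmono := mono_of_step (m := N) hffstep
  have hgfmono := mono_of_step (m := N) hgfstep
  have hSlen : (markStr xy (Tstr n G u v)).length
      = 4 * n + LL n + (LGr n G v).length := by
    rw [markStr, List.length_map, length_Tstr]
  -- the folding
  have hfold := exists_folding_of_mono (wt n k) (markStr xy (Tstr n G u v)) N
    (fun i => (ff i, 4 * n + LL n + ((LGr n G v).length - 1 - gf i)))
    (by
      intro i hi
      have h1 := (hmain i hi).1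
      simp only
      omega)
    (by
      intro i hi
      have h2 := (hmain i hi).2.1
      simp only [hSlen]
      omega)
    (by
      intro i j hij hj
      simp only
      exact hffmono i j hij hj)
    (by
      intro i j hij hj
      have h2i := (hmain i (by omega)).2.1
      have h2j := (hmain j hj).2.1
      have := hgfmono i j hij hj
      simp only
      omega)
    (by
      intro i hi
      have h1 := (hmain i hi).1
      have h2 := (hmain i hi).2.1
      have h3 := (hmain i hi).2.2.1
      simp only
      apply lmatch_helper xy (Tstr n G u v)
        (by rw [length_Tstr]; omega)
        (by rw [length_Tstr]; omega)
      · -- primedness differs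
        rw [Tstr_getD_left (by omega : ff i < 4 * n + LL n),
          Tstr_getD_right (by omega : gf i < (LGr n G v).length)]
        have hmem1 : (NGr n u).getD (ff i) dol ∈ NGr n u := by
          rw [List.getD_eq_getElem _ _ (by rw [length_NGr]; omega)]
          exact List.getElem_mem _
        have hmem2 : (LGr n G v).getD (gf i) dol ∈ LGr n G v := by
          rw [List.getD_eq_getElem _ _ (by omega)]
          exact List.getElem_mem _
        rw [(mem_NGr_cases hmem1).1,
          show (pr1 ((LGr n G v).getD (gf i) dol)).1
            = !((LGr n G v).getD (gf i) dol).1 from rfl, mem_LGr_cases hmem2]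
        simp
      · -- bases match
        rw [Tstr_getD_left (by omega : ff i < 4 * n + LL n),
          Tstr_getD_right (by omega : gf i < (LGr n G v).length)]
        exact h3)
  -- compute the sum
  have hsumval : ∀ i ∈ Finset.range N,
      ((markStr xy (Tstr n G u v)).map
        (Sum.elim (wt n k) (wt n k))).getD
          ((fun i => (ff i, 4 * n + LL n + ((LGr n G v).length - 1 - gf i))) i).1 0
      = (if c₁ + 1 ≤ i ∧ i < c₁ + 1 + L then 1 else Wd n) := by
    intro i hi
    rw [Finset.mem_range] at hi
    have hffM := (hmain i hi).1
    have hlen : ff i < (Tstr n G u v).length := by rw [length_Tstr]; omega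
    simp only
    rw [markStr]
    rw [List.getD_eq_getElem _ _ (by simpa using hlen)]
    rw [List.getElem_map, List.getElem_map, elim_wt_mark]
    rw [← List.getD_eq_getElem (Tstr n G u v) dol hlen]
    rw [show ((Tstr n G u v).getD (ff i) dol)
        = (NGr n u).getD (ff i) dol from Tstr_getD_left (by omega)]
    exact (hmain i hi).2.2.2
  rw [Finset.sum_congr rfl hsumval] at hfold
  have hsum2 : ∑ i ∈ Finset.range N, (if c₁ + 1 ≤ i ∧ i < c₁ + 1 + L then 1 else Wd n)
      = 2 * n * Wd n + L := by
    rw [Finset.sum_ite]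
    rw [Finset.sum_const, Finset.sum_const, smul_eq_mul, smul_eq_mul, mul_one]
    have h1 : (Finset.range N).filter (fun i => c₁ + 1 ≤ i ∧ i < c₁ + 1 + L)
        = Finset.Ico (c₁ + 1) (c₁ + 1 + L) := by
      ext a
      simp only [Finset.mem_filter, Finset.mem_range, Finset.mem_Ico]
      omega
    have htot := Finset.card_filter_add_card_filter_not
      (s := Finset.range N) (p := fun i => c₁ + 1 ≤ i ∧ i < c₁ + 1 + L)
    rw [h1, Nat.card_Ico, Finset.card_range] at htot
    rw [h1, Nat.card_Ico]
    rw [show c₁ + 1 + L - (c₁ + 1) = L from by omega]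
    rw [show ((Finset.range N).filter
        (fun i => ¬(c₁ + 1 ≤ i ∧ i < c₁ + 1 + L))).card = 2 * n from by omega]
    ring
  rw [hsum2] at hfold
  exact hfold

/-- Claim 3.4 of the paper.
There is an integer `E₁` depending only on `n` (the paper computes `E₁ = (10n+1)·log n`) such
that for every `xy ∈ {αβ, αγ, βγ}` and every pair of nodes `u, v` of `G`: the weighted RNA
folding score `WRNA([NG(u) ∘ p(LG(v))^R]_xy)` equals `E₁` if `u ∈ N(v)`, and is at most
`E₁ − 1` otherwise. -/
theorem wrna_node_list_gadget (n : ℕ) :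
    ∃ E₁ : ℕ, ∀ (k : ℕ) (G : SimpleGraph (Fin n)) (xy : PT) (u v : Fin n),
      (G.Adj v u →
        WRNA (wt n k) (markStr xy (NGr n u ++ (primeStr (LGr n G v)).reverse)) = E₁) ∧
      (¬ G.Adj v u →
        WRNA (wt n k) (markStr xy (NGr n u ++ (primeStr (LGr n G v)).reverse)) ≤ E₁ - 1) := by
  refine ⟨2 * n * Wd n + LL n, fun k G xy u v => ?_⟩
  have hT : NGr n u ++ (primeStr (LGr n G v)).reverse = Tstr n G u v := rfl
  rw [hT]
  constructor
  · intro hadj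
    apply le_antisymm
    · apply wrna_le
      intro A hA
      obtain ⟨a, b, ha, hb, hsum, _⟩ := key_upper n k G xy u v A hA
      rw [hsum]
      have h1 : a * Wd n ≤ 2 * n * Wd n := Nat.mul_le_mul_right _ ha
      omega
    · exact key_lower n k G xy u v hadj
  · intro hnadj
    apply wrna_le
    intro A hA
    obtain ⟨a, b, ha, hb, hsum, himp⟩ := key_upper n k G xy u v A hA
    rw [hsum]
    rcases Nat.lt_or_ge n 2 with hn | hn
    · have hW : Wd n = 0 := by
        rw [Wd, logn]
        interval_cases n <;> simp
      have hL : LL n = 0 := by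
        rw [LL]
        interval_cases n <;> simp
      rw [hW] at *
      omega
    · have hWpos : 1 ≤ Wd n := by
        rw [Wd, logn]
        have := Nat.log_pos (b := 2) (by norm_num) hn
        omega
      rcases Nat.lt_or_ge a (2 * n) with hlt | hge
      · have h1 : a * Wd n + Wd n ≤ 2 * n * Wd n := by
          have h2 : (a + 1) * Wd n ≤ 2 * n * Wd n := Nat.mul_le_mul_right _ (by omega)
          calc a * Wd n + Wd n = (a + 1) * Wd n := by ring
            _ ≤ _ := h2
        omega
      · have ha2 : a = 2 * n := by omega
        rcases Nat.lt_or_ge b (LL n) with hb2 | hb2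
        · rw [ha2]
          omega
        · have hb3 : b = LL n := by omega
          exact absurd (himp hn ha2 hb3) hnadj

end RNAFolding
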